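/- Let W be a finite-dimensional complex vector space, ħ ∈ ℂ, and let (A_{k,i})_{k ≥ 1, i ≥ 0} be a family of endomorphisms of W with A_{k,i} = 0 for all but finitely many pairs (k, i). Let U ⊆ W ⊗_ℂ ℂ[t, t^{−1}] be the ℂ-linear span of the vectors w ⊗ t^i + Σ_{k ≥ 1} A_{k,i}(w) ⊗ t^{−k} for all w ∈ W and i ≥ 0. Let α_ħ : W ⊗ ℂ[t, t^{−1}] → W ⊗ ℂ[t, t^{−1}] be the linear map with α_ħ(w ⊗ t^j) = w ⊗ t^j for j ≠ 0 and α_ħ(w ⊗ t^0) = ħ w ⊗ t^0. Then α_ħ((id_W ⊗ t)(U)) ⊆ U if and only if A_{k+1,i} = A_{k,i+1} + ħ A_{k,0} A_{1,i} for all k ≥ 1 and i ≥ 0. -/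

import Mathlib

open Finsupp

section Aux

variable {W : Type} [AddCommGroup W] [Module ℂ W]

private lemma supp_single (c : ℕ → ℤ) (u : ℕ → W) (hu : (Function.support u).Finite) :
    (Function.support fun k => Finsupp.single (c k) (u k)).Finite := by
  apply hu.subset
  intro k hk
  simp only [Function.mem_support] at hk ⊢
  intro h
  exact hk (by rw [h, Finsupp.single_zero])

private lemma finsumSingle_apply_eq (c : ℕ → ℤ) (hc : Function.Injective c)
    (u : ℕ → W) (hu : (Function.support u).Finite) (m : ℕ) :
    (∑ᶠ k, Finsupp.single (c k) (u k)) (c m) = u m := by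
  rw [show ((∑ᶠ k, Finsupp.single (c k) (u k)) (c m))
      = Finsupp.applyAddHom (M := W) (c m) (∑ᶠ k, Finsupp.single (c k) (u k)) from rfl,
    (Finsupp.applyAddHom (M := W) (c m)).map_finsum (supp_single c u hu)]
  rw [finsum_eq_single _ m (fun k hk => ?_)]
  · exact Finsupp.single_eq_same
  · exact Finsupp.single_eq_of_ne (fun h => hk (hc h.symm))

private lemma finsumSingle_apply_ne (c : ℕ → ℤ) (u : ℕ → W)
    (hu : (Function.support u).Finite) (j : ℤ) (hj : ∀ k, c k ≠ j) :
    (∑ᶠ k, Finsupp.single (c k) (u k)) j = 0 := by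
  rw [show ((∑ᶠ k, Finsupp.single (c k) (u k)) j)
      = Finsupp.applyAddHom (M := W) j (∑ᶠ k, Finsupp.single (c k) (u k)) from rfl,
    (Finsupp.applyAddHom (M := W) j).map_finsum (supp_single c u hu)]
  exact finsum_eq_zero_of_forall_eq_zero fun k => Finsupp.single_eq_of_ne (hj k).symm

/-- peeling the first term of a finsum of singles at nonpositive indices -/
private lemma peel (u : ℕ → W) (hu : (Function.support u).Finite) :
    ∑ᶠ k : ℕ, Finsupp.single (-(k : ℤ)) (u k)
      = Finsupp.single (0 : ℤ) (u 0) + ∑ᶠ k : ℕ, Finsupp.single (-(k : ℤ) - 1) (u (k + 1)) := by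
  have hinj1 : Function.Injective (fun k : ℕ => -(k : ℤ)) := by
    intro a b h; simpa using h
  have hinj2 : Function.Injective (fun k : ℕ => -(k : ℤ) - 1) := by
    intro a b h; simp only [sub_left_inj, neg_inj, Nat.cast_inj] at h; exact h
  have hu' : (Function.support fun k => u (k + 1)).Finite := by
    have : (Function.support fun k => u (k + 1)) ⊆ (fun k => k + 1) ⁻¹' Function.support u :=
      fun k hk => hk
    exact (hu.preimage (fun a _ b _ h => by omega)).subset this
  ext j
  rcases lt_trichotomy j 0 with hj | rfl | hj
  · obtain ⟨m, rfl⟩ : ∃ m : ℕ, j = -(m : ℤ) - 1 := ⟨(-j - 1).toNat, by omega⟩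
    rw [Finsupp.add_apply,
      Finsupp.single_eq_of_ne (by omega),
      finsumSingle_apply_eq _ hinj2 _ hu' m, zero_add,
      show (-(m : ℤ) - 1) = -((m + 1 : ℕ) : ℤ) from by push_cast; ring,
      finsumSingle_apply_eq _ hinj1 _ hu (m + 1)]
  · rw [Finsupp.add_apply,
      show (0 : ℤ) = -((0 : ℕ) : ℤ) from by norm_num,
      finsumSingle_apply_eq _ hinj1 _ hu 0,
      finsumSingle_apply_ne _ _ hu' _ (fun k => by omega), Finsupp.single_eq_same, add_zero]
  · rw [Finsupp.add_apply,
      finsumSingle_apply_ne _ _ hu _ (fun k => by omega),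
      finsumSingle_apply_ne _ _ hu' _ (fun k => by omega),
      Finsupp.single_eq_of_ne (by omega), add_zero]

variable (A : ℕ → ℕ → (W →ₗ[ℂ] W))

/-- the generator map: `w ↦ w ⊗ tⁱ + ∑ₖ A_{k,i} w ⊗ t^{-k}` as a linear map. -/
noncomputable def Vmap (i : ℕ) : W →ₗ[ℂ] (ℤ →₀ W) :=
  Finsupp.lsingle (i : ℤ) + ∑ᶠ k : ℕ, (Finsupp.lsingle (-(k : ℤ) - 1)).comp (A (k + 1) i)

section hfin

variable (hfin : {p : ℕ × ℕ | A p.1 p.2 ≠ 0}.Finite)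

include hfin in
private lemma auxfin (s i : ℕ) : {k : ℕ | A (k + s) i ≠ 0}.Finite := by
  have : {k : ℕ | A (k + s) i ≠ 0} = (fun k => (k + s, i)) ⁻¹' {p : ℕ × ℕ | A p.1 p.2 ≠ 0} := rfl
  rw [this]
  exact hfin.preimage (fun a _ b _ h => by have := congrArg Prod.fst h; simp at this; omega)

include hfin in
private lemma auxfin' (s i : ℕ) (w : W) :
    (Function.support fun k => A (k + s) i w).Finite := by
  apply (auxfin A hfin s i).subset
  intro k hk
  simp only [Function.mem_support] at hk
  intro h
  exact hk (by rw [h, LinearMap.zero_apply])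

include hfin in
private lemma Vmap_apply (i : ℕ) (w : W) :
    Vmap A i w = Finsupp.single (i : ℤ) w
      + ∑ᶠ k : ℕ, Finsupp.single (-(k : ℤ) - 1) (A (k + 1) i w) := by
  have hsupp : (Function.support
      fun k : ℕ => (Finsupp.lsingle (R := ℂ) (-(k : ℤ) - 1)).comp (A (k + 1) i)).Finite := by
    apply (auxfin A hfin 1 i).subset
    intro k hk
    simp only [Function.mem_support] at hk
    intro h
    exact hk (by rw [h, LinearMap.comp_zero])
  have := ((LinearMap.applyₗ (R := ℂ) w :
      (W →ₗ[ℂ] (ℤ →₀ W)) →ₗ[ℂ] (ℤ →₀ W))).toAddMonoidHom.map_finsum hsupp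
  simp only [LinearMap.toAddMonoidHom_coe, LinearMap.applyₗ_apply_apply] at this
  simp only [Vmap, LinearMap.add_apply, Finsupp.lsingle_apply, this, LinearMap.comp_apply]

/-- the "extension" map, sending `w ⊗ tⁱ` (`i ≥ 0`) to the generator `Vmap A i w`. -/
noncomputable def Emap : (ℤ →₀ W) →ₗ[ℂ] (ℤ →₀ W) :=
  Finsupp.lsum ℂ (fun j : ℤ => if 0 ≤ j then Vmap A j.toNat else 0)

private lemma E_single_nonneg (i : ℕ) (w : W) :
    Emap A (Finsupp.single (i : ℤ) w) = Vmap A i w := by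
  rw [Emap, Finsupp.lsum_single, if_pos (by positivity), Int.toNat_natCast]

private lemma E_single_neg (k : ℕ) (u : W) :
    Emap A (Finsupp.single (-(k : ℤ) - 1) u) = 0 := by
  rw [Emap, Finsupp.lsum_single, if_neg (by omega), LinearMap.zero_apply]

private lemma E_tail (u : ℕ → W) (hu : (Function.support u).Finite) :
    Emap A (∑ᶠ k : ℕ, Finsupp.single (-(k : ℤ) - 1) (u k)) = 0 := by
  have := (Emap A).toAddMonoidHom.map_finsum
    (f := fun k : ℕ => Finsupp.single (-(k : ℤ) - 1) (u k)) (supp_single _ u hu)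
  simp only [LinearMap.toAddMonoidHom_coe] at this
  rw [this]
  exact finsum_eq_zero_of_forall_eq_zero fun k => E_single_neg A k (u k)

include hfin in
private lemma E_gen (i : ℕ) (w : W) : Emap A (Vmap A i w) = Vmap A i w := by
  rw [Vmap_apply A hfin, map_add, E_single_nonneg, E_tail A _ (auxfin' A hfin 1 i w), add_zero,
    Vmap_apply A hfin]

include hfin in
private lemma mapd (i : ℕ) (w : W) :
    Finsupp.mapDomain (· + 1) (Vmap A i w)
      = Finsupp.single ((i : ℤ) + 1) w + (Finsupp.single (0 : ℤ) (A 1 i w)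
        + ∑ᶠ k : ℕ, Finsupp.single (-(k : ℤ) - 1) (A (k + 2) i w)) := by
  have hmap := (Finsupp.lmapDomain W ℂ (· + (1 : ℤ))).toAddMonoidHom.map_finsum
    (f := fun k : ℕ => Finsupp.single (-(k : ℤ) - 1) (A (k + 1) i w))
    (supp_single _ _ (auxfin' A hfin 1 i w))
  simp only [LinearMap.toAddMonoidHom_coe, Finsupp.lmapDomain_apply] at hmap
  rw [Vmap_apply A hfin, Finsupp.mapDomain_add, Finsupp.mapDomain_single, hmap]
  congr 1
  have : ∀ k : ℕ, Finsupp.mapDomain (· + (1 : ℤ)) (Finsupp.single (-(k : ℤ) - 1) (A (k + 1) i w))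
      = Finsupp.single (-(k : ℤ)) (A (k + 1) i w) := by
    intro k
    rw [Finsupp.mapDomain_single]
    norm_num
  rw [finsum_congr this, peel _ (auxfin' A hfin 1 i w)]

include hfin in
private lemma mapd_zero (i : ℕ) (w : W) :
    (Finsupp.mapDomain (· + 1) (Vmap A i w)) 0 = A 1 i w := by
  rw [mapd A hfin, Finsupp.add_apply, Finsupp.add_apply,
    Finsupp.single_eq_of_ne (by omega), Finsupp.single_eq_same,
    finsumSingle_apply_ne _ _ (auxfin' A hfin 2 i w) _ (fun k => by omega)]
  abel

include hfin in
private lemma auxfin3 (hbar : ℂ) (i : ℕ) (w : W) :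
    (Function.support fun k : ℕ =>
      (A (k + 2) i - A (k + 1) (i + 1) - hbar • ((A (k + 1) 0) ∘ₗ (A 1 i))) w).Finite := by
  apply Set.Finite.subset
    (((auxfin' A hfin 2 i w).union (auxfin' A hfin 1 (i + 1) w)).union
      (auxfin' A hfin 1 0 (A 1 i w)))
  intro k hk
  simp only [Function.mem_support, Set.mem_union] at hk ⊢
  by_contra h
  push_neg at h
  apply hk
  simp only [LinearMap.sub_apply, LinearMap.smul_apply, LinearMap.comp_apply,
    h.1.1, h.1.2, h.2, smul_zero, sub_zero, zero_sub, neg_zero]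

include hfin in
private lemma key (hbar : ℂ) (i : ℕ) (w : W) :
    Finsupp.mapDomain (· + 1) (Vmap A i w)
      + Finsupp.single 0 ((hbar - 1) • (Finsupp.mapDomain (· + 1) (Vmap A i w)) 0)
    = Vmap A (i + 1) w + Vmap A 0 (hbar • A 1 i w)
      + ∑ᶠ k : ℕ, Finsupp.single (-(k : ℤ) - 1)
          ((A (k + 2) i - A (k + 1) (i + 1) - hbar • ((A (k + 1) 0) ∘ₗ (A 1 i))) w) := by
  have h1 := auxfin' A hfin 1 (i + 1) w
  have h2 : (Function.support fun k => A (k + 1) 0 (hbar • A 1 i w)).Finite :=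
    auxfin' A hfin 1 0 (hbar • A 1 i w)
  have h3 : (Function.support fun k : ℕ =>
      (A (k + 2) i - A (k + 1) (i + 1) - hbar • ((A (k + 1) 0) ∘ₗ (A 1 i))) w).Finite := by
    apply Set.Finite.subset
      (((auxfin' A hfin 2 i w).union (auxfin' A hfin 1 (i + 1) w)).union
        (auxfin' A hfin 1 0 (A 1 i w)))
    intro k hk
    simp only [Function.mem_support, Set.mem_union] at hk ⊢
    by_contra h
    push_neg at h
    apply hk
    simp only [LinearMap.sub_apply, LinearMap.smul_apply, LinearMap.comp_apply,
      h.1.1, h.1.2, h.2, smul_zero, sub_zero, zero_sub, neg_zero]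
  have htails : (∑ᶠ k : ℕ, Finsupp.single (-(k : ℤ) - 1) (A (k + 1) (i + 1) w))
      + ((∑ᶠ k : ℕ, Finsupp.single (-(k : ℤ) - 1) (A (k + 1) 0 (hbar • A 1 i w)))
      + (∑ᶠ k : ℕ, Finsupp.single (-(k : ℤ) - 1)
          ((A (k + 2) i - A (k + 1) (i + 1) - hbar • ((A (k + 1) 0) ∘ₗ (A 1 i))) w)))
      = ∑ᶠ k : ℕ, Finsupp.single (-(k : ℤ) - 1) (A (k + 2) i w) := by
    rw [← finsum_add_distrib (supp_single _ _ h2) (supp_single _ _ h3),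
      ← finsum_add_distrib (supp_single _ _ h1)
        ((supp_single _ _ h2).union (supp_single _ _ h3) |>.subset
          (Function.support_add _ _))]
    refine finsum_congr fun k => ?_
    rw [← Finsupp.single_add, ← Finsupp.single_add]
    congr 1
    simp only [LinearMap.sub_apply, LinearMap.smul_apply, LinearMap.comp_apply, map_smul]
    abel
  rw [mapd_zero A hfin, mapd A hfin, Vmap_apply A hfin (i + 1), Vmap_apply A hfin 0]
  rw [← htails]
  have hs : Finsupp.single (0 : ℤ) (A 1 i w) + Finsupp.single (0 : ℤ) ((hbar - 1) • A 1 i w)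
      = Finsupp.single (0 : ℤ) (hbar • A 1 i w) := by
    rw [← Finsupp.single_add]
    congr 1
    rw [sub_smul, one_smul]
    abel
  push_cast
  rw [← hs]
  abel

end hfin

end Aux

/- We model `W ⊗ ℂ[t,t⁻¹]` as the space `ℤ →₀ W` of finitely supported functions
`ℤ → W` (the value at `j` being the coefficient of `t^j`); `w ⊗ t^j` corresponds to
`Finsupp.single j w`, multiplication by `t` corresponds to `Finsupp.mapDomain (· + 1)`,
and `α_hbar` is the map rescaling the coefficient of `t^0` by `hbar`. -/

theorem stmt9 (W : Type) [AddCommGroup W] [Module ℂ W] [FiniteDimensional ℂ W]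
    (hbar : ℂ) (A : ℕ → ℕ → (W →ₗ[ℂ] W))
    (hfin : {p : ℕ × ℕ | A p.1 p.2 ≠ 0}.Finite)
    (αₕ : (ℤ →₀ W) → (ℤ →₀ W))
    (hα : ∀ g : ℤ →₀ W, αₕ g = g + Finsupp.single 0 ((hbar - 1) • g 0))
    (U : Submodule ℂ (ℤ →₀ W))
    (hU : U = Submodule.span ℂ {v : ℤ →₀ W | ∃ (i : ℕ) (w : W),
      v = Finsupp.single (i : ℤ) w +
        ∑ᶠ k : ℕ, Finsupp.single (-(k : ℤ) - 1) (A (k + 1) i w)}) :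
    (∀ u ∈ U, αₕ (Finsupp.mapDomain (· + 1) u) ∈ U) ↔
    (∀ k i : ℕ, 1 ≤ k → A (k + 1) i = A k (i + 1) + hbar • ((A k 0) ∘ₗ (A 1 i))) := by
  have hgen : ∀ (i : ℕ) (w : W), Vmap A i w ∈ U := by
    intro i w
    rw [hU]
    exact Submodule.subset_span ⟨i, w, Vmap_apply A hfin i w⟩
  have hfix : ∀ x ∈ U, Emap A x = x := by
    rw [hU]
    intro x hx
    induction hx using Submodule.span_induction with
    | mem x hx =>
        obtain ⟨i, w, rfl⟩ := hx
        rw [← Vmap_apply A hfin]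
        exact E_gen A hfin i w
    | zero => exact map_zero _
    | add x y _ _ ihx ihy => rw [map_add, ihx, ihy]
    | smul c x _ ihx => rw [map_smul, ihx]
  have hinj : Function.Injective (fun k : ℕ => -(k : ℤ) - 1) := by
    intro a b h
    simp only [sub_left_inj, neg_inj, Nat.cast_inj] at h
    exact h
  constructor
  · intro h k i hk
    obtain ⟨m, rfl⟩ : ∃ m, k = m + 1 := ⟨k - 1, by omega⟩
    ext w
    have hmem := h (Vmap A i w) (hgen i w)
    rw [hα, key A hfin hbar i w] at hmem
    have hfixed := hfix _ hmem
    rw [map_add, map_add, E_gen A hfin, E_gen A hfin,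
      E_tail A _ (auxfin3 A hfin hbar i w), add_zero] at hfixed
    have hT3 := left_eq_add.mp hfixed
    have heval : (A (m + 2) i - A (m + 1) (i + 1) - hbar • ((A (m + 1) 0) ∘ₗ (A 1 i))) w = 0 := by
      rw [← finsumSingle_apply_eq _ hinj _ (auxfin3 A hfin hbar i w) m, hT3, Finsupp.zero_apply]
    simp only [LinearMap.sub_apply] at heval
    rw [sub_sub, sub_eq_zero] at heval
    simp only [LinearMap.add_apply]
    exact heval
  · intro hrel u hu
    rw [hU] at hu
    set L : (ℤ →₀ W) →ₗ[ℂ] (ℤ →₀ W) :=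
      (LinearMap.id + (Finsupp.lsingle 0) ∘ₗ ((hbar - 1) • Finsupp.lapply 0)) ∘ₗ
        Finsupp.lmapDomain W ℂ (· + 1) with hLdef
    have hLa : ∀ g : ℤ →₀ W, αₕ (Finsupp.mapDomain (· + 1) g) = L g := by
      intro g
      rw [hα]
      simp [hLdef]
    rw [hLa]
    induction hu using Submodule.span_induction with
    | mem x hx =>
        obtain ⟨i, w, rfl⟩ := hx
        rw [← Vmap_apply A hfin, ← hLa, hα, key A hfin hbar i w]
        have hT3 : (∑ᶠ k : ℕ, Finsupp.single (-(k : ℤ) - 1)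
            ((A (k + 2) i - A (k + 1) (i + 1) - hbar • ((A (k + 1) 0) ∘ₗ (A 1 i))) w)) = 0 := by
          refine finsum_eq_zero_of_forall_eq_zero fun k => ?_
          have hz : A (k + 2) i - A (k + 1) (i + 1) - hbar • ((A (k + 1) 0) ∘ₗ (A 1 i)) = 0 := by
            rw [show A (k + 2) i = A (k + 1) (i + 1) + hbar • ((A (k + 1) 0) ∘ₗ (A 1 i)) from
              hrel (k + 1) i (by omega)]
            abel
          rw [hz, LinearMap.zero_apply, Finsupp.single_zero]
        rw [hT3, add_zero]
        exact Submodule.add_mem U (hgen (i + 1) w) (hgen 0 _)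
    | zero => rw [map_zero]; exact Submodule.zero_mem U
    | add x y _ _ ihx ihy => rw [map_add]; exact Submodule.add_mem U ihx ihy
    | smul c x _ ihx => rw [map_smul]; exact Submodule.smul_mem U c ihx
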